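/- Let ν ∈ G_A^max, i.e., ν is a Borel probability measure on S whose support is contained in the set of global maximizers of W_ν on S. Then for every Borel probability measure η on S whose support is contained in the support of ν, one has I_A(ν) ≤ I_A(η). -/

import Mathlib

open MeasureTheory Real Filter Topology

noncomputable section

/-- The unit sphere `S = 𝕊^{d-1}` in `ℝ^d`. -/
abbrev Sph (d : ℕ) : Type := Metric.sphere (0 : EuclideanSpace ℝ (Fin d)) 1

variable {d : ℕ}

/-- The bilinear form `⟨x, A y⟩` for the diagonal matrix `A = diag lam`. -/
def qA (lam : Fin d → ℝ) (x y : EuclideanSpace ℝ (Fin d)) : ℝ :=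
  ∑ i, lam i * x i * y i

/-- The interaction kernel `K_A(x,y) = exp ⟨x, A y⟩`. -/
def Kker (lam : Fin d → ℝ) (x y : Sph d) : ℝ :=
  Real.exp (qA lam (x : EuclideanSpace ℝ (Fin d)) (y : EuclideanSpace ℝ (Fin d)))

/-- The interaction energy `I_A(μ)`. -/
def IA (lam : Fin d → ℝ) (μ : Measure (Sph d)) : ℝ :=
  ∫ x, ∫ y, Kker lam x y ∂μ ∂μ

/-- The potential `W_μ(x) = ∫ K_A(x,y) dμ(y)`. -/
def WA (lam : Fin d → ℝ) (μ : Measure (Sph d)) (x : Sph d) : ℝ :=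
  ∫ y, Kker lam x y ∂μ

open scoped Classical in
/-- Relative entropy of `μ` with respect to `ω`, with value `+∞` when `μ` is not
absolutely continuous w.r.t. `ω` or the entropy integral diverges. -/
def Ent (ω μ : Measure (Sph d)) : EReal :=
  if μ ≪ ω ∧ Integrable (fun x => Real.log (μ.rnDeriv ω x).toReal) μ
  then ((∫ x, Real.log (μ.rnDeriv ω x).toReal ∂μ : ℝ) : EReal)
  else ⊤

/-- The free energy `E_{ε,A}(μ) = ε·Ent(μ) − (1/2)·I_A(μ)`. -/
def EA (lam : Fin d → ℝ) (ω : Measure (Sph d)) (ε : ℝ) (μ : Measure (Sph d)) : EReal :=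
  (ε : EReal) * Ent ω μ - ((IA lam μ / 2 : ℝ) : EReal)

/-- The antipodal map on the sphere. -/
def antip (x : Sph d) : Sph d :=
  ⟨-(x : EuclideanSpace ℝ (Fin d)), by
    have hx := x.2
    rw [mem_sphere_zero_iff_norm] at hx ⊢
    rwa [norm_neg]⟩

/-- The sphere self-map induced by a linear isometry equivalence of `ℝ^d`. -/
def sphMap (g : EuclideanSpace ℝ (Fin d) ≃ₗᵢ[ℝ] EuclideanSpace ℝ (Fin d)) (x : Sph d) : Sph d :=
  ⟨g (x : EuclideanSpace ℝ (Fin d)), by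
    have hx := x.2
    rw [mem_sphere_zero_iff_norm] at hx ⊢
    rwa [g.norm_map]⟩

/-- `ω` is the uniform probability measure on the sphere, characterised as a
rotation-invariant Borel probability measure. -/
def IsUniform (ω : Measure (Sph d)) : Prop :=
  IsProbabilityMeasure ω ∧
  ∀ g : EuclideanSpace ℝ (Fin d) ≃ₗᵢ[ℝ] EuclideanSpace ℝ (Fin d),
    Measure.map (sphMap g) ω = ω

/-- The (topological) support of a measure. -/
def msupport (μ : Measure (Sph d)) : Set (Sph d) :=
  {x | ∀ U : Set (Sph d), IsOpen U → x ∈ U → 0 < μ U}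

/-- The set of global maximizers of the potential `W_ν`. -/
def argmaxW (lam : Fin d → ℝ) (ν : Measure (Sph d)) : Set (Sph d) :=
  {x | ∀ y, WA lam ν y ≤ WA lam ν x}

/-- `μ` is a Gibbs critical point of `E_{ε,A}`. -/
def IsGibbs (lam : Fin d → ℝ) (ω : Measure (Sph d)) (ε : ℝ) (μ : Measure (Sph d)) : Prop :=
  IsProbabilityMeasure μ ∧
  μ = ω.withDensity (fun x => ENNReal.ofReal
    (Real.exp (WA lam μ x / ε) / ∫ z, Real.exp (WA lam μ z / ε) ∂ω))

/-- `μ` is a global minimizer of `E_{ε,A}` over Borel probability measures. -/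
def IsMinimizer (lam : Fin d → ℝ) (ω : Measure (Sph d)) (ε : ℝ) (μ : Measure (Sph d)) : Prop :=
  IsProbabilityMeasure μ ∧
  ∀ ν : Measure (Sph d), IsProbabilityMeasure ν → EA lam ω ε μ ≤ EA lam ω ε ν

/-- `m_ε`, the infimum of the free energy over probability measures. -/
def mEps (lam : Fin d → ℝ) (ω : Measure (Sph d)) (ε : ℝ) : EReal :=
  sInf {r : EReal | ∃ μ : Measure (Sph d), IsProbabilityMeasure μ ∧ EA lam ω ε μ = r}

section SeriesAux
open Nat

variable {d : ℕ}

lemma coord_abs_le_one (x : Sph d) (i : Fin d) : |(x : EuclideanSpace ℝ (Fin d)) i| ≤ 1 := by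
  have hx : ‖(x : EuclideanSpace ℝ (Fin d))‖ = 1 := mem_sphere_zero_iff_norm.mp x.2
  have h1 : |(x : EuclideanSpace ℝ (Fin d)) i| ≤ ‖(x : EuclideanSpace ℝ (Fin d))‖ := by
    rw [EuclideanSpace.norm_eq, ← Real.sqrt_sq_eq_abs]
    apply Real.sqrt_le_sqrt
    have := Finset.single_le_sum (f := fun j => ‖(x : EuclideanSpace ℝ (Fin d)) j‖ ^ 2)
      (fun j _ => sq_nonneg _) (Finset.mem_univ i)
    simpa [Real.norm_eq_abs, sq_abs] using this
  rwa [hx] at h1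

lemma cont_coord (i : Fin d) : Continuous (fun x : Sph d => (x : EuclideanSpace ℝ (Fin d)) i) :=
  (EuclideanSpace.proj (𝕜 := ℝ) i).continuous.comp continuous_subtype_val

lemma integrable_cont {f : Sph d → ℝ} (hf : Continuous f) (μ : Measure (Sph d))
    [IsFiniteMeasure μ] : Integrable f μ :=
  hf.integrable_of_hasCompactSupport
    (IsCompact.of_isClosed_subset isCompact_univ (isClosed_tsupport f) (Set.subset_univ _))

lemma exp_series (t : ℝ) : Real.exp t = ∑' n : ℕ, t ^ n / n ! := by
  rw [Real.exp_eq_exp_ℝ, NormedSpace.exp_eq_tsum_div]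

def mom (μ : Measure (Sph d)) (n : ℕ) (p : Fin n → Fin d) : ℝ :=
  ∫ x, ∏ j, (x : EuclideanSpace ℝ (Fin d)) (p j) ∂μ

lemma qA_pow (lam : Fin d → ℝ) (x y : EuclideanSpace ℝ (Fin d)) (n : ℕ) :
    qA lam x y ^ n = ∑ p : Fin n → Fin d, ∏ j, (lam (p j) * x (p j) * y (p j)) := by
  have h : qA lam x y ^ n = ∏ _j : Fin n, (∑ i, lam i * x i * y i) := by
    simp [qA, Finset.prod_const]
  rw [h, Finset.prod_univ_sum]
  simp [Fintype.piFinset_univ]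

lemma term_factor (lam : Fin d → ℝ) (x y : EuclideanSpace ℝ (Fin d)) {n : ℕ} (p : Fin n → Fin d) :
    ∏ j, (lam (p j) * x (p j) * y (p j))
      = (∏ j, lam (p j)) * (∏ j, x (p j)) * (∏ j, y (p j)) := by
  rw [← Finset.prod_mul_distrib, ← Finset.prod_mul_distrib]

lemma sum_prod_lam (lam : Fin d → ℝ) (n : ℕ) :
    ∑ p : Fin n → Fin d, ∏ j, lam (p j) = (∑ i, lam i) ^ n := by
  have h : (∑ i, lam i) ^ n = ∏ _j : Fin n, (∑ i, lam i) := by simp [Finset.prod_const]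
  rw [h, Finset.prod_univ_sum]
  simp [Fintype.piFinset_univ]

lemma prod_coord_abs_le_one (x : Sph d) {n : ℕ} (p : Fin n → Fin d) :
    |∏ j, (x : EuclideanSpace ℝ (Fin d)) (p j)| ≤ 1 := by
  rw [Finset.abs_prod]
  exact Finset.prod_le_one (fun j _ => abs_nonneg _) (fun j _ => coord_abs_le_one x (p j))

lemma cont_prod_coord {n : ℕ} (p : Fin n → Fin d) :
    Continuous (fun x : Sph d => ∏ j, (x : EuclideanSpace ℝ (Fin d)) (p j)) :=
  continuous_finset_prod _ (fun j _ => cont_coord (p j))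

lemma mom_abs_le_one (μ : Measure (Sph d)) [IsProbabilityMeasure μ] {n : ℕ}
    (p : Fin n → Fin d) : |mom μ n p| ≤ 1 := by
  have := norm_integral_le_of_norm_le_const (μ := μ) (C := 1)
    (f := fun x : Sph d => ∏ j, (x : EuclideanSpace ℝ (Fin d)) (p j))
    (Filter.Eventually.of_forall fun x => by
      rw [Real.norm_eq_abs]; exact prod_coord_abs_le_one x p)
  simpa [mom, Real.norm_eq_abs, measure_univ] using this

lemma qA_abs_le (lam : Fin d → ℝ) (hpos : ∀ i, 0 ≤ lam i) (x y : Sph d) :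
    |qA lam (x : EuclideanSpace ℝ (Fin d)) (y : EuclideanSpace ℝ (Fin d))| ≤ ∑ i, lam i := by
  refine (Finset.abs_sum_le_sum_abs _ _).trans ?_
  apply Finset.sum_le_sum
  intro i _
  rw [abs_mul, abs_mul, abs_of_nonneg (hpos i)]
  calc lam i * |(x : EuclideanSpace ℝ (Fin d)) i| * |(y : EuclideanSpace ℝ (Fin d)) i|
      ≤ lam i * 1 * 1 := by
        have h1 := coord_abs_le_one x i
        have h2 := coord_abs_le_one y i
        have h3 := abs_nonneg ((x : EuclideanSpace ℝ (Fin d)) i)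
        have h4 := abs_nonneg ((y : EuclideanSpace ℝ (Fin d)) i)
        have h5 := hpos i
        nlinarith [mul_nonneg h5 h3]
    _ = lam i := by ring

lemma cont_qA_y (lam : Fin d → ℝ) (x : Sph d) :
    Continuous (fun y : Sph d =>
      qA lam (x : EuclideanSpace ℝ (Fin d)) (y : EuclideanSpace ℝ (Fin d))) := by
  unfold qA
  exact continuous_finset_sum _ fun i _ => (continuous_const.mul (cont_coord i))

lemma int_qA_pow (lam : Fin d → ℝ) (x : Sph d) (ρ : Measure (Sph d))
    [IsProbabilityMeasure ρ] (n : ℕ) :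
    ∫ y, qA lam (x : EuclideanSpace ℝ (Fin d)) (y : EuclideanSpace ℝ (Fin d)) ^ n ∂ρ
      = ∑ p : Fin n → Fin d,
          (∏ j, lam (p j)) * (∏ j, (x : EuclideanSpace ℝ (Fin d)) (p j)) * mom ρ n p := by
  have h : ∀ y : Sph d,
      qA lam (x : EuclideanSpace ℝ (Fin d)) (y : EuclideanSpace ℝ (Fin d)) ^ n
        = ∑ p : Fin n → Fin d,
            ((∏ j, lam (p j)) * (∏ j, (x : EuclideanSpace ℝ (Fin d)) (p j)))
              * (∏ j, (y : EuclideanSpace ℝ (Fin d)) (p j)) := by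
    intro y
    rw [qA_pow]
    exact Finset.sum_congr rfl fun p _ => (term_factor lam _ _ p)
  simp_rw [h]
  rw [integral_finset_sum _ (fun p _ =>
    ((integrable_cont (cont_prod_coord p) ρ).const_mul _))]
  refine Finset.sum_congr rfl fun p _ => ?_
  rw [integral_const_mul, mom]

lemma inner_series (lam : Fin d → ℝ) (hpos : ∀ i, 0 ≤ lam i) (x : Sph d)
    (ρ : Measure (Sph d)) [IsProbabilityMeasure ρ] :
    ∫ y, Real.exp (qA lam (x : EuclideanSpace ℝ (Fin d)) (y : EuclideanSpace ℝ (Fin d))) ∂ρ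
      = ∑' n : ℕ,
          (∫ y, qA lam (x : EuclideanSpace ℝ (Fin d)) (y : EuclideanSpace ℝ (Fin d)) ^ n ∂ρ)
            / (Nat.factorial n) := by
  set C : ℝ := ∑ i, lam i with hC
  set F : ℕ → Sph d → ℝ := fun n y =>
    qA lam (x : EuclideanSpace ℝ (Fin d)) (y : EuclideanSpace ℝ (Fin d)) ^ n
      / (Nat.factorial n) with hF
  have hInt : ∀ n, Integrable (F n) ρ := fun n =>
    integrable_cont (((cont_qA_y lam x).pow n).div_const _) ρ
  have hbound : ∀ n (y : Sph d), ‖F n y‖ ≤ C ^ n / (Nat.factorial n) := by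
    intro n y
    rw [hF]
    simp only [Real.norm_eq_abs, abs_div, abs_pow]
    rw [abs_of_nonneg (a := ((Nat.factorial n : ℕ) : ℝ)) (by positivity)]
    have h1 : |qA lam (x : EuclideanSpace ℝ (Fin d)) (y : EuclideanSpace ℝ (Fin d))| ^ n ≤ C ^ n :=
      pow_le_pow_left₀ (abs_nonneg _) (qA_abs_le lam hpos x y) n
    exact (div_le_div_iff_of_pos_right (by positivity)).mpr h1
  have hSum : Summable fun n => ∫ y, ‖F n y‖ ∂ρ := by
    apply Summable.of_nonneg_of_le (fun n => integral_nonneg fun y => norm_nonneg _)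
      (fun n => ?_) (Real.summable_pow_div_factorial C)
    calc ∫ y, ‖F n y‖ ∂ρ ≤ ∫ _y, C ^ n / (Nat.factorial n) ∂ρ :=
          integral_mono ((hInt n).norm) (integrable_const _) (hbound n)
      _ = C ^ n / (Nat.factorial n) := by simp [measure_univ]
  have hkey := integral_tsum_of_summable_integral_norm hInt hSum
  have hexp : ∀ y : Sph d,
      (∑' n : ℕ, F n y)
        = Real.exp (qA lam (x : EuclideanSpace ℝ (Fin d)) (y : EuclideanSpace ℝ (Fin d))) := by
    intro y
    rw [exp_series]
  calc ∫ y, Real.exp (qA lam (x : EuclideanSpace ℝ (Fin d))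
          (y : EuclideanSpace ℝ (Fin d))) ∂ρ
      = ∫ y, ∑' n : ℕ, F n y ∂ρ := by
        apply integral_congr_ae
        exact Filter.Eventually.of_forall fun y => (hexp y).symm
    _ = ∑' n : ℕ, ∫ y, F n y ∂ρ := hkey.symm
    _ = ∑' n : ℕ,
          (∫ y, qA lam (x : EuclideanSpace ℝ (Fin d)) (y : EuclideanSpace ℝ (Fin d)) ^ n ∂ρ)
            / (Nat.factorial n) := by
        refine tsum_congr fun n => ?_
        rw [hF]
        exact integral_div _ _

lemma int_poly (lam : Fin d → ℝ) (μ ρ : Measure (Sph d)) [IsProbabilityMeasure μ]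
    [IsProbabilityMeasure ρ] (n : ℕ) :
    ∫ x, ∫ y,
        qA lam (x : EuclideanSpace ℝ (Fin d)) (y : EuclideanSpace ℝ (Fin d)) ^ n ∂ρ ∂μ
      = ∑ p : Fin n → Fin d, (∏ j, lam (p j)) * mom μ n p * mom ρ n p := by
  have h : ∀ x : Sph d,
      ∫ y, qA lam (x : EuclideanSpace ℝ (Fin d)) (y : EuclideanSpace ℝ (Fin d)) ^ n ∂ρ
        = ∑ p : Fin n → Fin d,
            ((∏ j, lam (p j)) * mom ρ n p) * (∏ j, (x : EuclideanSpace ℝ (Fin d)) (p j)) :=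
    fun x => (int_qA_pow lam x ρ n).trans
      (Finset.sum_congr rfl fun p _ => by ring)
  simp_rw [h]
  rw [integral_finset_sum _ (fun p _ =>
    (integrable_cont (cont_prod_coord p) μ).const_mul _)]
  refine Finset.sum_congr rfl fun p _ => ?_
  rw [integral_const_mul]
  show (∏ j, lam (p j)) * mom ρ n p * mom μ n p = _
  ring

lemma double_series (lam : Fin d → ℝ) (hpos : ∀ i, 0 ≤ lam i) (μ ρ : Measure (Sph d))
    [IsProbabilityMeasure μ] [IsProbabilityMeasure ρ] :
    ∫ x, ∫ y,
        Real.exp (qA lam (x : EuclideanSpace ℝ (Fin d)) (y : EuclideanSpace ℝ (Fin d))) ∂ρ ∂μ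
      = ∑' n : ℕ,
          (∑ p : Fin n → Fin d, (∏ j, lam (p j)) * mom μ n p * mom ρ n p)
            / (Nat.factorial n) := by
  set C : ℝ := ∑ i, lam i with hC
  set G : ℕ → Sph d → ℝ := fun n x =>
    (∫ y, qA lam (x : EuclideanSpace ℝ (Fin d)) (y : EuclideanSpace ℝ (Fin d)) ^ n ∂ρ)
      / (Nat.factorial n) with hG
  have hGfun : ∀ n, G n = fun x : Sph d =>
      (∑ p : Fin n → Fin d,
        ((∏ j, lam (p j)) * mom ρ n p) * (∏ j, (x : EuclideanSpace ℝ (Fin d)) (p j)))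
          / (Nat.factorial n) := by
    intro n
    funext x
    rw [hG]
    simp only
    congr 1
    exact (int_qA_pow lam x ρ n).trans (Finset.sum_congr rfl fun p _ => by ring)
  have hGcont : ∀ n, Continuous (G n) := by
    intro n
    rw [hGfun n]
    exact ((continuous_finset_sum _ fun p _ =>
      continuous_const.mul (cont_prod_coord p)).div_const _)
  have hGint : ∀ n, Integrable (G n) μ := fun n => integrable_cont (hGcont n) μ
  have hGbound : ∀ n (x : Sph d), ‖G n x‖ ≤ C ^ n / (Nat.factorial n) := by
    intro n x
    rw [hG]
    simp only [Real.norm_eq_abs, abs_div]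
    rw [abs_of_nonneg (a := ((Nat.factorial n : ℕ) : ℝ)) (by positivity)]
    have h1 : |∫ y, qA lam (x : EuclideanSpace ℝ (Fin d))
        (y : EuclideanSpace ℝ (Fin d)) ^ n ∂ρ| ≤ C ^ n := by
      have := norm_integral_le_of_norm_le_const (μ := ρ) (C := C ^ n)
        (f := fun y : Sph d =>
          qA lam (x : EuclideanSpace ℝ (Fin d)) (y : EuclideanSpace ℝ (Fin d)) ^ n)
        (Filter.Eventually.of_forall fun y => by
          rw [Real.norm_eq_abs, abs_pow]
          exact pow_le_pow_left₀ (abs_nonneg _) (qA_abs_le lam hpos x y) n)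
      simpa [Real.norm_eq_abs, measure_univ] using this
    exact (div_le_div_iff_of_pos_right (by positivity)).mpr h1
  have hSum : Summable fun n => ∫ x, ‖G n x‖ ∂μ := by
    apply Summable.of_nonneg_of_le (fun n => integral_nonneg fun x => norm_nonneg _)
      (fun n => ?_) (Real.summable_pow_div_factorial C)
    calc ∫ x, ‖G n x‖ ∂μ ≤ ∫ _x, C ^ n / (Nat.factorial n) ∂μ :=
          integral_mono ((hGint n).norm) (integrable_const _) (hGbound n)
      _ = C ^ n / (Nat.factorial n) := by simp [measure_univ]
  have hkey := integral_tsum_of_summable_integral_norm hGint hSum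
  calc ∫ x, ∫ y, Real.exp (qA lam (x : EuclideanSpace ℝ (Fin d))
          (y : EuclideanSpace ℝ (Fin d))) ∂ρ ∂μ
      = ∫ x, ∑' n : ℕ, G n x ∂μ := by
        apply integral_congr_ae
        exact Filter.Eventually.of_forall fun x => inner_series lam hpos x ρ
    _ = ∑' n : ℕ, ∫ x, G n x ∂μ := hkey.symm
    _ = ∑' n : ℕ,
          (∑ p : Fin n → Fin d, (∏ j, lam (p j)) * mom μ n p * mom ρ n p)
            / (Nat.factorial n) := by
        refine tsum_congr fun n => ?_
        rw [hG]
        simp only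
        rw [integral_div, int_poly lam μ ρ n]

lemma term_bound (lam : Fin d → ℝ) (hpos : ∀ i, 0 ≤ lam i) (μ ρ : Measure (Sph d))
    [IsProbabilityMeasure μ] [IsProbabilityMeasure ρ] (n : ℕ) :
    |(∑ p : Fin n → Fin d, (∏ j, lam (p j)) * mom μ n p * mom ρ n p) / (Nat.factorial n)|
      ≤ (∑ i, lam i) ^ n / (Nat.factorial n) := by
  rw [abs_div, abs_of_nonneg (a := ((Nat.factorial n : ℕ) : ℝ)) (by positivity)]
  apply (div_le_div_iff_of_pos_right (by positivity)).mpr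
  calc |∑ p : Fin n → Fin d, (∏ j, lam (p j)) * mom μ n p * mom ρ n p|
      ≤ ∑ p : Fin n → Fin d, |(∏ j, lam (p j)) * mom μ n p * mom ρ n p| :=
        Finset.abs_sum_le_sum_abs _ _
    _ ≤ ∑ p : Fin n → Fin d, ∏ j, lam (p j) := by
        apply Finset.sum_le_sum
        intro p _
        rw [abs_mul, abs_mul, abs_of_nonneg (Finset.prod_nonneg fun j _ => hpos (p j))]
        have h1 := mom_abs_le_one μ p
        have h2 := mom_abs_le_one ρ p
        have h3 := abs_nonneg (mom μ n p)
        have h4 := abs_nonneg (mom ρ n p)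
        have h5 : (0:ℝ) ≤ ∏ j, lam (p j) := Finset.prod_nonneg fun j _ => hpos (p j)
        nlinarith [mul_nonneg h5 h3]
    _ = (∑ i, lam i) ^ n := sum_prod_lam lam n

lemma series_summable (lam : Fin d → ℝ) (hpos : ∀ i, 0 ≤ lam i) (μ ρ : Measure (Sph d))
    [IsProbabilityMeasure μ] [IsProbabilityMeasure ρ] :
    Summable (fun n : ℕ =>
      (∑ p : Fin n → Fin d, (∏ j, lam (p j)) * mom μ n p * mom ρ n p) / (Nat.factorial n)) :=
  Summable.of_norm_bounded (Real.summable_pow_div_factorial (∑ i, lam i))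
    (fun n => by rw [Real.norm_eq_abs]; exact term_bound lam hpos μ ρ n)

lemma psd (lam : Fin d → ℝ) (hpos : ∀ i, 0 ≤ lam i) (μ ρ : Measure (Sph d))
    [IsProbabilityMeasure μ] [IsProbabilityMeasure ρ] :
    2 * ∫ x, ∫ y,
        Real.exp (qA lam (x : EuclideanSpace ℝ (Fin d)) (y : EuclideanSpace ℝ (Fin d))) ∂ρ ∂μ
      ≤ (∫ x, ∫ y,
          Real.exp (qA lam (x : EuclideanSpace ℝ (Fin d)) (y : EuclideanSpace ℝ (Fin d))) ∂μ ∂μ)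
        + ∫ x, ∫ y,
          Real.exp (qA lam (x : EuclideanSpace ℝ (Fin d)) (y : EuclideanSpace ℝ (Fin d))) ∂ρ ∂ρ := by
  rw [double_series lam hpos μ ρ, double_series lam hpos μ μ, double_series lam hpos ρ ρ,
    ← tsum_mul_left, ← Summable.tsum_add (series_summable lam hpos μ μ) (series_summable lam hpos ρ ρ)]
  apply Summable.tsum_le_tsum _ ((series_summable lam hpos μ ρ).mul_left 2)
    ((series_summable lam hpos μ μ).add (series_summable lam hpos ρ ρ))
  intro n
  rw [← mul_div_assoc, ← add_div]
  apply (div_le_div_iff_of_pos_right (by positivity)).mpr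
  rw [Finset.mul_sum, ← Finset.sum_add_distrib]
  apply Finset.sum_le_sum
  intro p _
  have h5 : (0:ℝ) ≤ ∏ j, lam (p j) := Finset.prod_nonneg fun j _ => hpos (p j)
  nlinarith [mul_nonneg h5 (sq_nonneg (mom μ n p - mom ρ n p))]


end SeriesAux


/- ## Auxiliary lemmas for `stmt4` -/

section Stmt4Aux
open Nat

variable {d : ℕ}

lemma msupport_compl_null (μ : Measure (Sph d)) : μ (msupport μ)ᶜ = 0 := by
  have hsub : (msupport μ)ᶜ
      = ⋃ U : {U : Set (Sph d) // IsOpen U ∧ μ U = 0}, (U : Set (Sph d)) := by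
    ext x
    simp only [Set.mem_compl_iff, msupport, Set.mem_setOf_eq, not_forall, Set.mem_iUnion]
    constructor
    · rintro ⟨U, hU, hxU, hμU⟩
      exact ⟨⟨U, hU, le_antisymm (not_lt.mp hμU) (by simp)⟩, hxU⟩
    · rintro ⟨⟨U, hU, hU0⟩, hx⟩
      exact ⟨U, hU, hx, by simp [hU0]⟩
  rw [hsub]
  obtain ⟨T, hTc, hTU⟩ := TopologicalSpace.isOpen_iUnion_countable
    (fun U : {U : Set (Sph d) // IsOpen U ∧ μ U = 0} => (U : Set (Sph d))) (fun U => U.2.1)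
  rw [← hTU]
  exact (measure_biUnion_null_iff hTc).mpr fun U _ => U.2.2

lemma msupport_nonempty (μ : Measure (Sph d)) [IsProbabilityMeasure μ] :
    (msupport μ).Nonempty := by
  by_contra h
  rw [Set.not_nonempty_iff_eq_empty] at h
  have h1 := msupport_compl_null μ
  rw [h, Set.compl_empty] at h1
  simp [measure_univ] at h1

end Stmt4Aux

/-- support minimality inside the max-support class. -/
theorem stmt4 (d : ℕ) (hd : 2 ≤ d) (lam : Fin d → ℝ)
    (hanti : Antitone lam)
    (hgap : lam ⟨1, by omega⟩ < lam ⟨0, by omega⟩)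
    (hpos : ∀ i, 0 < lam i)
    (ν : Measure (Sph d)) (hν : IsProbabilityMeasure ν)
    (hsupp : msupport ν ⊆ argmaxW lam ν)
    (η : Measure (Sph d)) (hη : IsProbabilityMeasure η)
    (hηsupp : msupport η ⊆ msupport ν) :
    IA lam ν ≤ IA lam η := by
  haveI := hν
  haveI := hη
  have hpos' : ∀ i, 0 ≤ lam i := fun i => (hpos i).le
  obtain ⟨x0, hx0⟩ := msupport_nonempty ν
  have hWconst : ∀ x ∈ msupport ν, WA lam ν x = WA lam ν x0 := fun x hx =>
    le_antisymm ((hsupp hx0) x) ((hsupp hx) x0)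
  have hae_η : ∀ᵐ x ∂η, WA lam ν x = WA lam ν x0 := by
    rw [MeasureTheory.ae_iff]
    refine measure_mono_null (fun x hx => ?_) (msupport_compl_null η)
    intro hxs
    exact hx (hWconst x (hηsupp hxs))
  have hae_ν : ∀ᵐ x ∂ν, WA lam ν x = WA lam ν x0 := by
    rw [MeasureTheory.ae_iff]
    refine measure_mono_null (fun x hx => ?_) (msupport_compl_null ν)
    intro hxs
    exact hx (hWconst x hxs)
  have hBην : ∫ x, WA lam ν x ∂η = WA lam ν x0 := by
    rw [integral_congr_ae (g := fun _ => WA lam ν x0) hae_η]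
    simp [measure_univ]
  have hIν : IA lam ν = WA lam ν x0 := by
    have h0 : IA lam ν = ∫ x, WA lam ν x ∂ν := rfl
    rw [h0, integral_congr_ae (g := fun _ => WA lam ν x0) hae_ν]
    simp [measure_univ]
  have hpsd := psd lam hpos' η ν
  have e1 : (∫ x, ∫ y, Real.exp (qA lam (x : EuclideanSpace ℝ (Fin d))
      (y : EuclideanSpace ℝ (Fin d))) ∂ν ∂η) = ∫ x, WA lam ν x ∂η := rfl
  have e2 : (∫ x, ∫ y, Real.exp (qA lam (x : EuclideanSpace ℝ (Fin d))
      (y : EuclideanSpace ℝ (Fin d))) ∂η ∂η) = IA lam η := rfl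
  have e3 : (∫ x, ∫ y, Real.exp (qA lam (x : EuclideanSpace ℝ (Fin d))
      (y : EuclideanSpace ℝ (Fin d))) ∂ν ∂ν) = IA lam ν := rfl
  rw [e1, e2, e3, hBην, hIν] at hpsd
  linarith

end
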